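/- Let X = {i, j, k} be a three-element set and consider an MSC model on the menu X with matrices Q(X), Q({i,j}), Q({i,k}), Q({j,k}) whose off-diagonal entries are all strictly positive except q_ik({i,k}) = 0 and q_ik(X) = 0 (alternative k is a decoy asymmetrically dominated by the target i). Let λ(·|N) denote the unique stationary distribution of Q(N) for N = X and N = {i,j}. Then λ(i|X)·λ(j|{i,j}) > λ(j|X)·λ(i|{i,j}), i.e. the relative choice frequency of the target i versus the competitor j is strictly higher in the presence of the decoy (the attraction effect in relative terms). -/
import Mathlib


open Finset

variable {X : Type*} [DecidableEq X]

/-- The menus relevant to an MSC model on `M`: `M` itself and the two-element subsets of `M`. -/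
def RelMenu (M N : Finset X) : Prop := N = M ∨ (N ⊆ M ∧ N.card = 2)

/-- `Q` is row-stochastic on `N`: nonnegative entries, rows summing to 1. -/
def RowStochOn (N : Finset X) (Q : X → X → ℝ) : Prop :=
  (∀ i ∈ N, ∀ j ∈ N, 0 ≤ Q i j) ∧ ∀ i ∈ N, ∑ j ∈ N, Q i j = 1

/-- The axioms of an MSC model on the menu `M`: row-stochasticity on relevant menus,
(A1) prolonged consideration, (A2) pairwise comparability on binary sets, (A3) TR-IIA. -/
def IsMSC (M : Finset X) (q : Finset X → X → X → ℝ) : Prop :=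
  (∀ N, RelMenu M N → RowStochOn N (q N)) ∧
  (∀ N, RelMenu M N → ∀ i ∈ N, 0 < q N i i) ∧
  (∀ i ∈ M, ∀ j ∈ M, i ≠ j → q {i, j} i j = 0 → 0 < q {i, j} j i) ∧
  (∀ N, RelMenu M N → ∀ i ∈ N, ∀ j ∈ N, i ≠ j →
    q {i, j} i j * q N j i = q {i, j} j i * q N i j)

/-- `p` is a stochastic choice function. -/
def IsSCF (p : Finset X → X → ℝ) : Prop :=
  ∀ N : Finset X, N.Nonempty →
    (∀ i, 0 ≤ p N i) ∧ (∀ i, i ∉ N → p N i = 0) ∧ ∑ i ∈ N, p N i = 1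

/-- `σ` is a stationary (row) vector of `Q` on `N`, i.e. `σ (I - Q) = 0` on `N`. -/
def StationaryOn (N : Finset X) (Q : X → X → ℝ) (σ : X → ℝ) : Prop :=
  ∀ j ∈ N, ∑ i ∈ N, σ i * Q i j = σ j

/-- The MSC model `q` rationalizes `p` on the menu `M`. -/
def Rationalizes (M : Finset X) (q : Finset X → X → X → ℝ) (p : Finset X → X → ℝ) : Prop :=
  IsMSC M q ∧ ∀ N, RelMenu M N → StationaryOn N (q N) (p N)

/-- The weighted difference in choice probabilities `δ_ij(M)`. -/
def delta (p : Finset X → X → ℝ) (M : Finset X) (i j : X) : ℝ :=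
  p M i * p {i, j} j - p {i, j} i * p M j

/-- The set of ordered pairs of consecutive elements (with wrap-around) of a list. -/
def cyclePairs (c : List X) : List (X × X) := c.zip (c.rotate 1)

/-- `c` is a cycle of distinct alternatives lying in (a subset of) `M`. -/
def IsCycleIn (M : Finset X) (c : List X) : Prop :=
  c.Nodup ∧ 2 ≤ c.length ∧ ∀ x ∈ c, x ∈ M

/-- All pairs of the cycle have strictly positive `δ`. -/
def PosConsistent (p : Finset X → X → ℝ) (M : Finset X) (c : List X) : Prop :=
  ∀ pr ∈ cyclePairs c, 0 < delta p M pr.1 pr.2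

/-- All pairs of the cycle have strictly negative `δ`. -/
def NegConsistent (p : Finset X → X → ℝ) (M : Finset X) (c : List X) : Prop :=
  ∀ pr ∈ cyclePairs c, delta p M pr.1 pr.2 < 0

/-- `p(·|M)` is bounded in a cycle over the pair `(i, j)`. -/
def BoundedInCycle (p : Finset X → X → ℝ) (M : Finset X) (i j : X) : Prop :=
  delta p M i j = 0 ∨
    ∃ c : List X, IsCycleIn M c ∧ (i, j) ∈ cyclePairs c ∧
      (PosConsistent p M c ∨ NegConsistent p M c)


/-- The attraction effect in relative terms: in an MSC model on `{i, j, k}` with all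
off-diagonal transition probabilities strictly positive except that the decoy comparison
`q_ik({i,k}) = q_ik({i,j,k}) = 0`, the stationary distributions satisfy
`λ(i|{i,j,k})·λ(j|{i,j}) > λ(j|{i,j,k})·λ(i|{i,j})`. -/
theorem stmt18 (i j k : X) (hij : i ≠ j) (hik : i ≠ k) (hjk : j ≠ k)
    (q : Finset X → X → X → ℝ) (hmsc : IsMSC {i, j, k} q)
    (hpos : ∀ N, RelMenu ({i, j, k} : Finset X) N → ∀ a ∈ N, ∀ b ∈ N, a ≠ b →
      ¬(a = i ∧ b = k) → 0 < q N a b)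
    (hik2 : q {i, k} i k = 0) (hikM : q ({i, j, k} : Finset X) i k = 0)
    (lam : Finset X → X → ℝ)
    (hlam : ∀ N : Finset X, N = ({i, j, k} : Finset X) ∨ N = ({i, j} : Finset X) →
      (∀ a, 0 ≤ lam N a) ∧ (∀ a, a ∉ N → lam N a = 0) ∧ (∑ a ∈ N, lam N a = 1) ∧
      StationaryOn N (q N) (lam N)) :
    lam {i, j, k} i * lam {i, j} j > lam {i, j, k} j * lam {i, j} i := by
  obtain ⟨hstoch, hA1, hA2, hA3⟩ := hmsc
  have hMrel : RelMenu ({i, j, k} : Finset X) ({i, j, k} : Finset X) := Or.inl rfl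
  have hiM : i ∈ ({i, j, k} : Finset X) := by simp
  have hjM : j ∈ ({i, j, k} : Finset X) := by simp
  have hkM : k ∈ ({i, j, k} : Finset X) := by simp
  have hPsub : ({i, j} : Finset X) ⊆ ({i, j, k} : Finset X) := by
    intro x hx
    simp only [Finset.mem_insert, Finset.mem_singleton] at hx ⊢
    tauto
  have hPcard : ({i, j} : Finset X).card = 2 := by
    rw [Finset.card_insert_of_notMem (by simp [hij]), Finset.card_singleton]
  have hPrel : RelMenu ({i, j, k} : Finset X) ({i, j} : Finset X) := Or.inr ⟨hPsub, hPcard⟩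
  obtain ⟨hl0, hlout, hlsum, hlst⟩ := hlam {i, j, k} (Or.inl rfl)
  obtain ⟨hp0, hpout, hpsum, hpst⟩ := hlam {i, j} (Or.inr rfl)
  have hsumM : ∀ f : X → ℝ, ∑ a ∈ ({i, j, k} : Finset X), f a = f i + f j + f k := by
    intro f
    rw [Finset.sum_insert (by simp [hij, hik]), Finset.sum_insert (by simp [hjk]),
      Finset.sum_singleton]
    ring
  have hsumP : ∀ f : X → ℝ, ∑ a ∈ ({i, j} : Finset X), f a = f i + f j := by
    intro f
    rw [Finset.sum_insert (by simp [hij]), Finset.sum_singleton]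
  -- notation
  set li := lam {i, j, k} i with hli
  set lj := lam {i, j, k} j with hlj
  set lk := lam {i, j, k} k with hlk
  set pi2 := lam {i, j} i with hpi2
  set pj2 := lam {i, j} j with hpj2
  -- positivity of entries
  have qMji : 0 < q {i, j, k} j i :=
    hpos _ hMrel j hjM i hiM (Ne.symm hij) (by rintro ⟨h1, _⟩; exact hij h1.symm)
  have qMki : 0 < q {i, j, k} k i :=
    hpos _ hMrel k hkM i hiM (Ne.symm hik) (by rintro ⟨h1, _⟩; exact hik h1.symm)
  have qMij : 0 < q {i, j, k} i j :=
    hpos _ hMrel i hiM j hjM hij (by rintro ⟨_, h2⟩; exact hjk h2)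
  have qMjk : 0 < q {i, j, k} j k :=
    hpos _ hMrel j hjM k hkM hjk (by rintro ⟨h1, _⟩; exact hij h1.symm)
  have hiP : i ∈ ({i, j} : Finset X) := by simp
  have hjP : j ∈ ({i, j} : Finset X) := by simp
  have qPij : 0 < q {i, j} i j :=
    hpos _ hPrel i hiP j hjP hij (by rintro ⟨_, h2⟩; exact hjk h2)
  have qPji : 0 < q {i, j} j i :=
    hpos _ hPrel j hjP i hiP (Ne.symm hij) (by rintro ⟨h1, _⟩; exact hij h1.symm)
  -- nonnegativity
  have hli0 : 0 ≤ li := hl0 i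
  have hlj0 : 0 ≤ lj := hl0 j
  have hlk0 : 0 ≤ lk := hl0 k
  obtain ⟨hq0M, hq1M⟩ := hstoch _ hMrel
  have qMkj0 : 0 ≤ q {i, j, k} k j := hq0M k hkM j hjM
  -- row sums on M
  have hrow_i : q {i, j, k} i i + q {i, j, k} i j + q {i, j, k} i k = 1 := by
    have := hq1M i hiM; rwa [hsumM] at this
  have hrow_j : q {i, j, k} j i + q {i, j, k} j j + q {i, j, k} j k = 1 := by
    have := hq1M j hjM
    rw [hsumM] at this; linarith
  have hrow_k : q {i, j, k} k i + q {i, j, k} k j + q {i, j, k} k k = 1 := by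
    have := hq1M k hkM
    rw [hsumM] at this; linarith
  -- stationarity columns on M
  have hcol_i : li * q {i, j, k} i i + lj * q {i, j, k} j i + lk * q {i, j, k} k i = li := by
    have := hlst i hiM; rwa [hsumM] at this
  have hcol_j : li * q {i, j, k} i j + lj * q {i, j, k} j j + lk * q {i, j, k} k j = lj := by
    have := hlst j hjM; rwa [hsumM] at this
  have hcol_k : li * q {i, j, k} i k + lj * q {i, j, k} j k + lk * q {i, j, k} k k = lk := by
    have := hlst k hkM; rwa [hsumM] at this
  have hlsum' : li + lj + lk = 1 := by
    have := hlsum; rwa [hsumM] at this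
  -- lk > 0
  have hlkpos : 0 < lk := by
    rcases lt_or_eq_of_le hlk0 with h | h
    · exact h
    · exfalso
      have hck : lj * q {i, j, k} j k = lk * (q {i, j, k} k i + q {i, j, k} k j) := by
        have h2 := congrArg (fun t => lk * t) hrow_k
        simp only [mul_one] at h2
        rw [hikM] at hcol_k
        ring_nf at h2 hcol_k ⊢
        linarith
      have hlj' : lj = 0 := by
        have : lj * q {i, j, k} j k = 0 := by rw [hck, ← h]; ring
        rcases mul_eq_zero.mp this with h' | h'
        · exact h'
        · exact absurd h' (ne_of_gt qMjk)
      have hcj : li * q {i, j, k} i j + lk * q {i, j, k} k j =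
          lj * (q {i, j, k} j i + q {i, j, k} j k) := by
        have h2 := congrArg (fun t => lj * t) hrow_j
        simp only [mul_one] at h2
        ring_nf at h2 hcol_j ⊢
        linarith
      have hli' : li = 0 := by
        have h1 : li * q {i, j, k} i j = 0 := by
          rw [hlj'] at hcj
          have := mul_nonneg hlk0 qMkj0
          have := mul_nonneg hli0 (le_of_lt qMij)
          nlinarith [hcj]
        rcases mul_eq_zero.mp h1 with h' | h'
        · exact h'
        · exact absurd h' (ne_of_gt qMij)
      rw [hli', hlj', ← h] at hlsum'
      norm_num at hlsum'
  -- pair relations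
  have hrowP_i : q {i, j} i i + q {i, j} i j = 1 := by
    have := (hstoch _ hPrel).2 i hiP; rwa [hsumP] at this
  have hcolP_i : pi2 * q {i, j} i i + pj2 * q {i, j} j i = pi2 := by
    have := hpst i hiP; rwa [hsumP] at this
  have hpsum' : pi2 + pj2 = 1 := by
    have := hpsum; rwa [hsumP] at this
  have E1 : pi2 * q {i, j} i j = pj2 * q {i, j} j i := by
    have h2 := congrArg (fun t => pi2 * t) hrowP_i
    simp only [mul_one] at h2
    ring_nf at h2 hcolP_i ⊢
    linarith
  have hpi2pos : 0 < pi2 := by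
    rcases lt_or_eq_of_le (hp0 i) with h | h
    · exact h
    · exfalso
      have hz : pi2 = 0 := hpi2.trans h.symm
      have : pj2 * q {i, j} j i = 0 := by rw [← E1, hz]; ring
      rcases mul_eq_zero.mp this with h' | h'
      · rw [hz, h'] at hpsum'; norm_num at hpsum'
      · exact absurd h' (ne_of_gt qPji)
  -- TR-IIA
  have E2 : q {i, j} i j * q {i, j, k} j i = q {i, j} j i * q {i, j, k} i j :=
    hA3 _ hMrel i hiM j hjM hij
  -- column i on M gives the key inequality
  have E3 : li * q {i, j, k} i j = lj * q {i, j, k} j i + lk * q {i, j, k} k i := by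
    have h2 := congrArg (fun t => li * t) hrow_i
    simp only [mul_one] at h2
    rw [hikM] at h2
    ring_nf at h2 hcol_i ⊢
    linarith
  have key : li * q {i, j, k} i j > lj * q {i, j, k} j i := by
    have : 0 < lk * q {i, j, k} k i := mul_pos hlkpos qMki
    linarith [E3]
  -- combine: li * a > lj * b where a = qPij, b = qPji
  have key2 : li * q {i, j} i j > lj * q {i, j} j i := by
    have h1 : li * q {i, j} i j * q {i, j, k} j i > lj * q {i, j} j i * q {i, j, k} j i := by
      calc li * q {i, j} i j * q {i, j, k} j i
          = li * (q {i, j} j i * q {i, j, k} i j) := by rw [← E2]; ring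
        _ = (li * q {i, j, k} i j) * q {i, j} j i := by ring
        _ > (lj * q {i, j, k} j i) * q {i, j} j i := by
            exact mul_lt_mul_of_pos_right key qPji
        _ = lj * q {i, j} j i * q {i, j, k} j i := by ring
    exact lt_of_mul_lt_mul_right (by linarith) (le_of_lt qMji)
  -- finish
  have final : li * pj2 * q {i, j} j i > lj * pi2 * q {i, j} j i := by
    calc li * pj2 * q {i, j} j i = li * (pj2 * q {i, j} j i) := by ring
      _ = li * (pi2 * q {i, j} i j) := by rw [E1]
      _ = (li * q {i, j} i j) * pi2 := by ring
      _ > (lj * q {i, j} j i) * pi2 := mul_lt_mul_of_pos_right key2 hpi2pos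
      _ = lj * pi2 * q {i, j} j i := by ring
  exact lt_of_mul_lt_mul_right (by linarith) (le_of_lt qPji)
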